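/- If u, v ∈ U_X and u ζ v, then ū ζ v̄. In particular, writing w⁰ = w w⁻¹, one has that the mirror image of w⁰ is ζ-related to (w̄)⁰ for every w ∈ U_X. -/

import Mathlib

/-- The opening symbol λ. -/
def lam (X : Type*) : X ⊕ Bool := Sum.inr false

/-- The closing symbol ρ. -/
def rho (X : Type*) : X ⊕ Bool := Sum.inr true

/-- For a word `u`, the word `u⁻¹ = λ u ρ`. -/
def winv {X : Type*} (u : List (X ⊕ Bool)) : List (X ⊕ Bool) :=
  [lam X] ++ u ++ [rho X]

/-- `U_X`: the least subset of `Y⁺` containing the one-letter words from `X`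
and closed under concatenation and `u ↦ u⁻¹`. -/
inductive UX (X : Type*) : List (X ⊕ Bool) → Prop
  | var (x : X) : UX X [Sum.inl x]
  | mul {u v : List (X ⊕ Bool)} : UX X u → UX X v → UX X (u ++ v)
  | inv {u : List (X ⊕ Bool)} : UX X u → UX X (winv u)

/-- Elements of `U_X` as a type. -/
def UWord (X : Type*) := {w : List (X ⊕ Bool) // UX X w}

/-- Concatenation on `U_X`. -/
def umul {X : Type*} (u v : UWord X) : UWord X := ⟨u.1 ++ v.1, UX.mul u.2 v.2⟩

/-- The unary operation `u ↦ u⁻¹` on `U_X`. -/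
def uinv {X : Type*} (u : UWord X) : UWord X := ⟨winv u.1, UX.inv u.2⟩

/-- `ζ`: the least equivalence relation on `U_X` containing the pairs
`(w, w w⁻¹ w)`, `(w, (w⁻¹)⁻¹)`, `(w w⁻¹, w⁻¹ w)` and compatible with
concatenation and the unary operation. -/
inductive zeta (X : Type*) : UWord X → UWord X → Prop
  | cr1 (w : UWord X) : zeta X w (umul (umul w (uinv w)) w)
  | cr2 (w : UWord X) : zeta X w (uinv (uinv w))
  | cr3 (w : UWord X) : zeta X (umul w (uinv w)) (umul (uinv w) w)
  | refl (w : UWord X) : zeta X w w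
  | symm {u v : UWord X} : zeta X u v → zeta X v u
  | trans {u v w : UWord X} : zeta X u v → zeta X v w → zeta X u w
  | mul {u u' v v' : UWord X} : zeta X u u' → zeta X v v' →
      zeta X (umul u v) (umul u' v')
  | inv {u v : UWord X} : zeta X u v → zeta X (uinv u) (uinv v)

/-- The letter map φ fixing `X` and interchanging λ and ρ. -/
def phi {X : Type*} : X ⊕ Bool → X ⊕ Bool
  | Sum.inl x => Sum.inl x
  | Sum.inr b => Sum.inr (!b)

/-- The mirror image of a word: `y₁⋯yₙ ↦ φ(yₙ)⋯φ(y₁)`. -/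
def mirror {X : Type*} (w : List (X ⊕ Bool)) : List (X ⊕ Bool) :=
  (w.map phi).reverse

/-- If `u ζ v` then `ū ζ v̄`; in particular, with `w⁰ = w w⁻¹`, the mirror image
of `w⁰` is ζ-related to `(w̄)⁰`. -/
lemma mirror_append {X : Type*} (u v : List (X ⊕ Bool)) :
    mirror (u ++ v) = mirror v ++ mirror u := by
  simp [mirror]

lemma mirror_winv {X : Type*} (u : List (X ⊕ Bool)) :
    mirror (winv u) = winv (mirror u) := by
  simp [mirror, winv, lam, rho, phi]

lemma UX.mirror {X : Type*} {w : List (X ⊕ Bool)} (h : UX X w) : UX X (mirror w) := by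
  induction h with
  | var x => simpa [_root_.mirror, phi] using UX.var x
  | mul hu hv ihu ihv => rw [mirror_append]; exact UX.mul ihv ihu
  | inv hu ih => rw [mirror_winv]; exact UX.inv ih

/-- Mirror as an operation on `UWord`. -/
def mW {X : Type*} (w : UWord X) : UWord X := ⟨mirror w.1, w.2.mirror⟩

lemma mW_mul {X : Type*} (u v : UWord X) : mW (umul u v) = umul (mW v) (mW u) :=
  Subtype.ext (mirror_append u.1 v.1)

lemma mW_inv {X : Type*} (u : UWord X) : mW (uinv u) = uinv (mW u) :=
  Subtype.ext (mirror_winv u.1)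

lemma umul_assoc {X : Type*} (u v w : UWord X) :
    umul (umul u v) w = umul u (umul v w) :=
  Subtype.ext (List.append_assoc u.1 v.1 w.1)

lemma zeta_mirror {X : Type*} {u v : UWord X} (h : zeta X u v) :
    zeta X (mW u) (mW v) := by
  induction h with
  | cr1 w =>
      rw [mW_mul, mW_mul, mW_inv, ← umul_assoc]
      exact zeta.cr1 (mW w)
  | cr2 w => rw [mW_inv, mW_inv]; exact zeta.cr2 (mW w)
  | cr3 w => rw [mW_mul, mW_mul, mW_inv]; exact (zeta.cr3 (mW w)).symm
  | refl w => exact zeta.refl _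
  | symm _ ih => exact ih.symm
  | trans _ _ ih1 ih2 => exact ih1.trans ih2
  | mul _ _ ih1 ih2 => rw [mW_mul, mW_mul]; exact zeta.mul ih2 ih1
  | inv _ ih => rw [mW_inv, mW_inv]; exact zeta.inv ih

theorem stmt7 {X : Type*} :
    (∀ u v : UWord X, zeta X u v →
      ∀ (hu : UX X (mirror u.1)) (hv : UX X (mirror v.1)),
        zeta X ⟨mirror u.1, hu⟩ ⟨mirror v.1, hv⟩) ∧
    (∀ w : UWord X,
      ∀ (h1 : UX X (mirror ((umul w (uinv w)).1))) (h2 : UX X (mirror w.1)),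
        zeta X ⟨mirror ((umul w (uinv w)).1), h1⟩
          (umul ⟨mirror w.1, h2⟩ (uinv ⟨mirror w.1, h2⟩))) := by
  constructor
  · intro u v h hu hv
    exact zeta_mirror h
  · intro w h1 h2
    have e : (⟨mirror ((umul w (uinv w)).1), h1⟩ : UWord X)
        = umul (uinv (mW w)) (mW w) := by
      rw [← mW_inv, ← mW_mul]; rfl
    rw [e]
    exact (zeta.cr3 (mW w)).symm
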